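/- Let G be a finite connected simple graph with edge-weight function w : E(G) → ℝ that is injective on the edge set, let T be the unique minimum spanning tree of G, and let S and D be two distinct vertices. Then the minimax value from S to D in G, namely the minimum over all S–D paths in G of the maximum edge weight on the path, equals the maximum edge weight on the unique S–D path in T. -/

import Mathlib

open SimpleGraph

/-- `T` is a spanning tree of `G`: a spanning subgraph (same vertex set, edges of `G`)
that is a tree (connected and acyclic). -/
def IsSpanningTree {V : Type*} (G T : SimpleGraph V) : Prop :=
  T ≤ G ∧ T.IsTree

/-- Total edge weight of a graph (sum of `w` over its edge set). -/
noncomputable def totalWeight {V : Type*} [Fintype V] (w : Sym2 V → ℝ)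
    (T : SimpleGraph V) : ℝ :=
  ∑ e ∈ T.edgeSet.toFinite.toFinset, w e

/-- Any walk endpoint reaches, after deleting `e`, either the other endpoint
or one of the two ends of `e`. -/
private lemma twoSides_aux {V : Type*} {T : SimpleGraph V} (e : Sym2 V) {x y : V}
    (q : T.Walk x y) : ∀ u v : V, e = s(u, v) →
      (T.deleteEdges {e}).Reachable x y ∨ (T.deleteEdges {e}).Reachable x u ∨
        (T.deleteEdges {e}).Reachable x v := by
  induction q with
  | nil => exact fun u v _ => Or.inl (Reachable.refl _)
  | @cons x y z h q ih =>
    intro u v he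
    by_cases hxy : s(x, y) = e
    · rw [he] at hxy
      rcases Sym2.eq_iff.mp hxy with ⟨rfl, rfl⟩ | ⟨rfl, rfl⟩
      · exact Or.inr (Or.inl (Reachable.refl _))
      · exact Or.inr (Or.inr (Reachable.refl _))
    · have hadj : (T.deleteEdges {e}).Adj x y := by
        simp only [deleteEdges_adj, Set.mem_singleton_iff]
        exact ⟨h, hxy⟩
      rcases ih u v he with h' | h' | h'
      · exact Or.inl (hadj.reachable.trans h')
      · exact Or.inr (Or.inl (hadj.reachable.trans h'))
      · exact Or.inr (Or.inr (hadj.reachable.trans h'))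

/-- Removing one edge from a connected graph leaves at most two reachability classes. -/
private lemma twoSides {V : Type*} {T : SimpleGraph V} {u v x : V} (q : T.Walk x u) :
    (T.deleteEdges {s(u, v)}).Reachable u x ∨ (T.deleteEdges {s(u, v)}).Reachable v x := by
  rcases twoSides_aux s(u, v) q u v rfl with h | h | h
  · exact Or.inl h.symm
  · exact Or.inl h.symm
  · exact Or.inr h.symm

/-- In a finite connected graph with distinct edge weights, with `T` the (unique)
minimum spanning tree and `S ≠ D` two vertices, the minimax value from `S` to `D`
(the minimum over all `S`–`D` paths in `G` of the maximum edge weight on the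
path) equals the maximum edge weight on the unique `S`–`D` path in `T`. -/
theorem minimax_value_eq_mst_path_max {V : Type*} [Fintype V]
    (G : SimpleGraph V) (hG : G.Connected)
    (w : Sym2 V → ℝ) (hw : Set.InjOn w G.edgeSet)
    (T : SimpleGraph V) (hT : IsSpanningTree G T)
    (hmin : ∀ T', IsSpanningTree G T' → totalWeight w T ≤ totalWeight w T')
    (S D : V) (hSD : S ≠ D)
    (pT : T.Walk S D) (hpT : pT.IsPath) :
    IsLeast {m : WithBot ℝ | ∃ p : G.Walk S D, p.IsPath ∧ (p.edges.map w).maximum = m}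
      ((pT.edges.map w).maximum) := by
  classical
  obtain ⟨hle, hTtree⟩ := hT
  constructor
  · refine ⟨pT.mapLe hle, (Walk.mapLe_isPath hle).mpr hpT, ?_⟩
    have hedges : (pT.mapLe hle).edges = pT.edges := by
      rw [Walk.edges_map]
      have hfun : ⇑(Hom.ofLE hle) = id := by
        funext a
        simp [Hom.ofLE_apply]
      rw [hfun, Sym2.map_id, List.map_id]
    rw [hedges]
  · rintro m ⟨p, hp, rfl⟩
    apply List.maximum_le_of_forall_le
    rintro x hx
    rw [List.mem_map] at hx
    obtain ⟨e, heT, rfl⟩ := hx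
    -- It suffices to find an edge on `p` of weight at least `w e`.
    by_contra hcon0
    have hcon : ∀ f ∈ p.edges, w f < w e := by
      intro f hf
      by_contra hwf
      push_neg at hwf
      exact hcon0 <| le_trans (WithBot.coe_le_coe.mpr hwf)
        (List.le_maximum_of_mem' (List.mem_map_of_mem (f := w) hf))
    clear hcon0
    -- The key exchange argument.
    have key : ∀ u v : V, T.Adj u v → s(u, v) ∈ pT.edges →
        (T.deleteEdges {s(u, v)}).Reachable u S →
        (∀ f ∈ p.edges, w f < w s(u, v)) → False := by
      intro u v hadj hmem huS hcon
      set e := s(u, v) with he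
      set Te := T.deleteEdges {e} with hTe
      have heT : e ∈ T.edgeSet := hadj
      -- `e` is a bridge of `T`.
      have hbr : ¬Te.Reachable u v :=
        (isBridge_iff.mp ((isAcyclic_iff_forall_adj_isBridge.mp hTtree.2) hadj))
      -- `S` and `D` are not reachable in `T` minus `e`.
      have hnSD : ¬Te.Reachable S D := by
        rintro ⟨q⟩
        have hsub : ∀ g ∈ q.toPath.1.edges, g ∈ T.edgeSet := fun g hg =>
          edgeSet_mono (T.deleteEdges_le _) (q.toPath.1.edges_subset_edgeSet hg)
      -- transfer the path to `T` and use uniqueness of paths in a tree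
        obtain ⟨P, _, hPuniq⟩ := hTtree.existsUnique_path S D
        have h1 : q.toPath.1.transfer T hsub = P :=
          hPuniq _ (q.toPath.2.transfer hsub)
        have h2 : pT = P := hPuniq _ hpT
        have hmem' : e ∈ (q.toPath.1.transfer T hsub).edges := by
          rw [h1, ← h2]; exact hmem
        rw [Walk.edges_transfer] at hmem'
        have := q.toPath.1.edges_subset_edgeSet hmem'
        rw [hTe, edgeSet_deleteEdges] at this
        exact this.2 rfl
      -- find an edge of `p` crossing the cut
      obtain ⟨d, hdp, hda, hdb⟩ :=
        p.exists_boundary_dart {x | Te.Reachable S x} (Reachable.refl S) hnSD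
      set a := d.fst
      set b := d.snd
      have hfp : d.edge ∈ p.edges := List.mem_map_of_mem (f := Dart.edge) hdp
      have hfG : G.Adj a b := d.adj
      have hfe : d.edge = s(a, b) := rfl
      have hwf : w s(a, b) < w e := hfe ▸ hcon _ hfp
      have hfne : s(a, b) ≠ e := fun h => absurd (h ▸ hwf) (lt_irrefl _)
      have hfT : s(a, b) ∉ T.edgeSet := by
        intro hfT
        have hTeadj : Te.Adj a b := by
          rw [hTe]
          simp only [deleteEdges_adj, Set.mem_singleton_iff]
          exact ⟨hfT, hfne⟩
        exact hdb (hda.trans hTeadj.reachable)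
      -- `b` is on the `v`-side
      have hSa : Te.Reachable S a := hda
      have hua : Te.Reachable u a := huS.trans hSa
      have hbv : Te.Reachable v b := by
        obtain ⟨q⟩ := hTtree.1 b u
        rcases twoSides (v := v) q with h' | h'
        · exact absurd (huS.symm.trans h') hdb
        · exact h'
      have hnab : ¬Te.Reachable a b := fun h => hdb (hda.trans h)
      -- The exchange graph
      set T'' := Te ⊔ fromEdgeSet {s(a, b)} with hT''
      have hTeT'' : Te ≤ T'' := le_sup_left
      have hT''ab : T''.Adj a b := by
        rw [hT'']
        exact Or.inr ⟨rfl, hfG.ne⟩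
      have hle'' : T'' ≤ G := by
        refine sup_le ((T.deleteEdges_le _).trans hle) ?_
        intro x y hxy
        rw [fromEdgeSet_adj, Set.mem_singleton_iff] at hxy
        rw [← mem_edgeSet, hxy.1]
        exact hfG
      -- Connectivity of T''
      have hvu'' : T''.Reachable v u :=
        ((hbv.mono hTeT'').trans hT''ab.symm.reachable).trans (hua.symm.mono hTeT'')
      have hreach : ∀ x, T''.Reachable u x := by
        intro x
        obtain ⟨q⟩ := hTtree.1 x u
        rcases twoSides (v := v) q with h' | h'
        · exact h'.mono hTeT''
        · exact hvu''.symm.trans (h'.mono hTeT'')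
      haveI : Nonempty V := hG.nonempty
      have hconn'' : T''.Connected :=
        Connected.mk (fun x y => (hreach x).symm.trans (hreach y))
      -- Acyclicity of T''
      have hacyc'' : T''.IsAcyclic := by
        intro x c hc
        by_cases hfc : s(a, b) ∈ c.edges
        · obtain ⟨-, hreach'⟩ :=
            adj_and_reachable_delete_edges_iff_exists_cycle.mpr ⟨x, c, hc, hfc⟩
          have hle' : (T'' \ fromEdgeSet {s(a, b)}) ≤ Te := by
            intro x y hxy
            obtain ⟨hxy1, hxy2⟩ := hxy
            rw [hT''] at hxy1
            rcases hxy1 with h' | h'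
            · exact h'
            · exact absurd h' hxy2
          exact hnab (hreach'.mono hle')
        · have hsub : ∀ g ∈ c.edges, g ∈ T.edgeSet := by
            intro g hg
            have hg' := c.edges_subset_edgeSet hg
            rw [hT'', edgeSet_sup] at hg'
            rcases hg' with h' | h'
            · exact edgeSet_mono (T.deleteEdges_le _) h'
            · rw [edgeSet_fromEdgeSet] at h'
              exact absurd (h'.1 ▸ hg) hfc
          exact hTtree.2 (c.transfer T hsub) (hc.transfer hsub)
      -- T'' is a spanning tree of smaller weight: contradiction.
      have hE'' : T''.edgeSet = (T.edgeSet \ {e}) ∪ {s(a, b)} := by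
        rw [hT'', edgeSet_sup, hTe, edgeSet_deleteEdges, edgeSet_fromEdgeSet]
        congr 1
        ext g
        simp only [Set.mem_diff, Set.mem_singleton_iff, Set.mem_setOf_eq,
          and_iff_left_iff_imp]
        rintro rfl
        exact fun hd => hfG.ne (Sym2.mk_isDiag_iff.mp hd)
      have heFin : e ∈ T.edgeSet.toFinite.toFinset := (Set.Finite.mem_toFinset _).mpr heT
      have hfFin : s(a, b) ∉ (T.edgeSet.toFinite.toFinset).erase e := by
        simp only [Finset.mem_erase, Set.Finite.mem_toFinset]
        exact fun h => hfT h.2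
      have hFeq : T''.edgeSet.toFinite.toFinset
          = insert (s(a, b)) ((T.edgeSet.toFinite.toFinset).erase e) := by
        ext g
        simp only [Set.Finite.mem_toFinset, hE'', Set.mem_union, Set.mem_diff,
          Set.mem_singleton_iff, Finset.mem_insert, Finset.mem_erase]
        tauto
      have hsum : totalWeight w T'' = w s(a, b) + (totalWeight w T - w e) := by
        rw [totalWeight, hFeq, Finset.sum_insert hfFin, Finset.sum_erase_eq_sub heFin]
        rfl
      have hge := hmin T'' ⟨hle'', hconn'', hacyc''⟩
      rw [hsum] at hge
      linarith
    -- Dispatch: find the dart of `pT` giving `e`, and orient it toward `S`.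
    have heT' : e ∈ List.map Dart.edge pT.darts := heT
    obtain ⟨d0, hd0, rfl⟩ := List.mem_map.mp heT'
    have hmem : d0.edge ∈ pT.edges := heT
    have hedge : d0.edge = s(d0.fst, d0.snd) := rfl
    obtain ⟨qS⟩ := hTtree.1 S d0.fst
    rcases twoSides (v := d0.snd) qS with h' | h'
    · exact key d0.fst d0.snd d0.adj hmem h' hcon
    · refine key d0.snd d0.fst d0.adj.symm ?_ ?_ ?_
      · rw [Sym2.eq_swap]; exact hmem
      · rwa [Sym2.eq_swap]
      · rw [Sym2.eq_swap]; exact hcon
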